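/- Fix n ≥ 1, real numbers ω₁, …, ω_n and κ₁, …, κ_n > 0, and let α : ℝ → ℂⁿ be differentiable with α_c'(t) = -i·ω_c·α_c(t) - Σ_{c'} (√(κ_c·κ_{c'})/2)·α_{c'}(t) for each c. Then for all t, d/dt (Σ_c |α_c(t)|²) = -|Σ_c √κ_c·α_c(t)|² ≤ 0; in particular t ↦ Σ_c |α_c(t)|² is non-increasing. -/

import Mathlib

open scoped BigOperators
open Complex Finset

/-- For `n ≥ 1` modes with frequencies `ω_c`, decay rates `κ_c > 0`, and coherent
amplitudes `α_c` obeying `α_c' = -i·ω_c·α_c - Σ_{c'} (√(κ_c·κ_{c'})/2)·α_{c'}`, the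
total photon number satisfies
`d/dt (Σ_c |α_c|²) = -|Σ_c √κ_c·α_c|² ≤ 0`; in particular `t ↦ Σ_c |α_c(t)|²` is
non-increasing. -/
theorem multimode_photon_number_lyapunov (n : ℕ) (hn : 1 ≤ n)
    (ω κ : Fin n → ℝ) (hκ : ∀ c, 0 < κ c) (α : ℝ → Fin n → ℂ)
    (hα : ∀ c (t : ℝ),
      HasDerivAt (fun t => α t c)
        (-(Complex.I * (ω c : ℂ)) * α t c
          - ∑ c', ((Real.sqrt (κ c * κ c') / 2 : ℝ) : ℂ) * α t c') t) :
    (∀ t : ℝ,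
      HasDerivAt (fun t => ∑ c, ‖α t c‖ ^ 2)
        (-‖∑ c, ((Real.sqrt (κ c) : ℂ)) * α t c‖ ^ 2) t)
    ∧ ∀ s t : ℝ, s ≤ t → ∑ c, ‖α t c‖ ^ 2 ≤ ∑ c, ‖α s c‖ ^ 2 := by
  set D : ℝ → Fin n → ℂ := fun t c =>
    -(Complex.I * (ω c : ℂ)) * α t c
      - ∑ c', ((Real.sqrt (κ c * κ c') / 2 : ℝ) : ℂ) * α t c' with hD
  set S : ℝ → ℂ := fun t => ∑ c, ((Real.sqrt (κ c) : ℂ)) * α t c with hS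
  have hsqrt : ∀ c c' : Fin n, ((Real.sqrt (κ c * κ c') / 2 : ℝ) : ℂ)
      = (Real.sqrt (κ c) : ℂ) * (Real.sqrt (κ c') : ℂ) / 2 := by
    intro c c'
    rw [Real.sqrt_mul (hκ c).le]
    push_cast
    ring
  have key : ∀ t, ∑ c, (D t c * starRingEnd ℂ (α t c) + α t c * starRingEnd ℂ (D t c))
      = -(S t * starRingEnd ℂ (S t)) := by
    intro t
    have hexp : ∀ c, D t c * starRingEnd ℂ (α t c) + α t c * starRingEnd ℂ (D t c)
        = ∑ c', -((Real.sqrt (κ c) : ℂ) * (Real.sqrt (κ c') : ℂ) / 2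
            * (α t c' * starRingEnd ℂ (α t c) + α t c * starRingEnd ℂ (α t c'))) := by
      intro c
      simp only [hD, map_sub, map_mul, map_sum, map_neg, Complex.conj_I, Complex.conj_ofReal,
        hsqrt, sub_mul, mul_sub, Finset.sum_mul, Finset.mul_sum, map_div₀, map_ofNat]
      rw [sub_add_sub_comm]
      have h0 : -(Complex.I * (ω c : ℂ)) * α t c * starRingEnd ℂ (α t c)
          + α t c * (-(-Complex.I * (ω c : ℂ)) * starRingEnd ℂ (α t c)) = 0 := by ring
      rw [h0, zero_sub, ← Finset.sum_add_distrib, ← Finset.sum_neg_distrib]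
      exact Finset.sum_congr rfl fun c' _ => by ring
    have hSS : S t * starRingEnd ℂ (S t)
        = ∑ c, ∑ c', (Real.sqrt (κ c) : ℂ) * (Real.sqrt (κ c') : ℂ)
            * (α t c * starRingEnd ℂ (α t c')) := by
      rw [hS]
      simp only [map_sum, map_mul, Complex.conj_ofReal, Finset.sum_mul_sum]
      exact Finset.sum_congr rfl fun c _ => Finset.sum_congr rfl fun c' _ => by ring
    rw [Finset.sum_congr rfl fun c _ => hexp c, hSS]
    have split : ∀ c : Fin n, ∑ c', -((Real.sqrt (κ c) : ℂ) * (Real.sqrt (κ c') : ℂ) / 2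
            * (α t c' * starRingEnd ℂ (α t c) + α t c * starRingEnd ℂ (α t c')))
        = (∑ c', -((Real.sqrt (κ c) : ℂ) * (Real.sqrt (κ c') : ℂ) / 2
            * (α t c' * starRingEnd ℂ (α t c))))
          + ∑ c', -((Real.sqrt (κ c) : ℂ) * (Real.sqrt (κ c') : ℂ) / 2
            * (α t c * starRingEnd ℂ (α t c'))) := by
      intro c
      rw [← Finset.sum_add_distrib]
      exact Finset.sum_congr rfl fun c' _ => by ring
    rw [Finset.sum_congr rfl fun c _ => split c, Finset.sum_add_distrib,
      Finset.sum_comm (s := Finset.univ) (t := Finset.univ)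
        (f := fun c c' => -((Real.sqrt (κ c) : ℂ) * (Real.sqrt (κ c') : ℂ) / 2
            * (α t c' * starRingEnd ℂ (α t c)))),
      ← Finset.sum_add_distrib, ← Finset.sum_neg_distrib]
    refine Finset.sum_congr rfl fun c _ => ?_
    rw [← Finset.sum_add_distrib, ← Finset.sum_neg_distrib]
    exact Finset.sum_congr rfl fun c' _ => by ring
  -- derivative of the complex-valued sum
  have hG : ∀ t, HasDerivAt (fun t => ∑ c, α t c * starRingEnd ℂ (α t c))
      (∑ c, (D t c * starRingEnd ℂ (α t c) + α t c * starRingEnd ℂ (D t c))) t := by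
    intro t
    exact HasDerivAt.fun_sum fun c _ => (hα c t).fun_mul (hα c t).star
  have hre : ∀ t : ℝ, HasDerivAt (fun t => ∑ c, ‖α t c‖ ^ 2) (-‖S t‖ ^ 2) t := by
    intro t
    have h1 := (Complex.reCLM.hasFDerivAt).comp_hasDerivAt t (hG t)
    have h2 : (Complex.reCLM ∘ fun t => ∑ c, α t c * starRingEnd ℂ (α t c))
        = fun t => ∑ c, ‖α t c‖ ^ 2 := by
      funext u
      simp [Complex.mul_conj, Complex.normSq_eq_norm_sq, Function.comp,
        ← Complex.ofReal_pow]
    have h3 : Complex.reCLM (∑ c, (D t c * starRingEnd ℂ (α t c)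
        + α t c * starRingEnd ℂ (D t c))) = -‖S t‖ ^ 2 := by
      rw [key t]
      simp [Complex.mul_conj, Complex.normSq_eq_norm_sq, ← Complex.ofReal_pow]
    rw [h2, h3] at h1
    exact h1
  refine ⟨fun t => hre t, ?_⟩
  have hmono : Antitone (fun t => ∑ c, ‖α t c‖ ^ 2) := by
    apply antitone_of_deriv_nonpos
    · exact fun t => (hre t).differentiableAt
    · intro t
      rw [(hre t).deriv]
      exact neg_nonpos.mpr (by positivity)
  exact fun s t hst => hmono hst
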